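/- arXiv:2412.03505 — 6 statements merged into one kernel-verified Lean document; each statement's English description precedes it below -/
import Mathlib

section
/- Let G be a bipartite graph with parts A and B. If the expected size of the common neighbourhood of t uniformly random distinct vertices of B is computed, then it is at least |A| · C(λ|B|, t) / C(|B|, t), where λ is the edge density of G and C(·,·) denotes binomial coefficients. -/
open scoped Classical

open Finset

noncomputable def gfun (t : ℕ) : ℝ → ℝ := fun x => ∏ i ∈ range t, max (x - i) 0

lemma gfun_nonneg (t : ℕ) (x : ℝ) : 0 ≤ gfun t x :=
  Finset.prod_nonneg fun _ _ => le_max_right _ _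

lemma max_sub_monotone (c : ℝ) : Monotone (fun x : ℝ => max (x - c) 0) :=
  Monotone.max (fun a b h => by simpa using h) monotone_const

lemma gfun_monotone (t : ℕ) : Monotone (gfun t) := by
  induction t with
  | zero => intro a b h; simp [gfun]
  | succ n ih =>
    have : (gfun (n + 1)) = (gfun n) * fun x : ℝ => max (x - (n:ℝ)) 0 := by
      ext x; simp [gfun, Finset.prod_range_succ]
    rw [this]
    exact ih.mul (max_sub_monotone n) (fun x => gfun_nonneg n x) (fun x => le_max_right _ _)

lemma gfun_convex (t : ℕ) : ConvexOn ℝ Set.univ (gfun t) := by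
  induction t with
  | zero =>
    have h0 : gfun 0 = fun _ => (1:ℝ) := by ext x; simp [gfun]
    rw [h0]; exact convexOn_const 1 convex_univ
  | succ n ih =>
    have h1 : ConvexOn ℝ Set.univ (fun x : ℝ => max (x - n) 0) :=
      ((convexOn_id convex_univ).sub (concaveOn_const _ convex_univ)).sup
        (convexOn_const 0 convex_univ)
    have := ih.mul h1 (fun x _ => gfun_nonneg n x) (fun x _ => le_max_right _ _)
      (((gfun_monotone n).monovary (max_sub_monotone n)).monovaryOn _)
    have e : gfun (n + 1) = gfun n * fun x : ℝ => max (x - (n:ℝ)) 0 := by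
      ext x
      simp [gfun, Finset.prod_range_succ]
    rw [e]; exact this

lemma gfun_nat (t n : ℕ) : gfun t n = (n.descFactorial t : ℝ) := by
  rw [Nat.descFactorial_eq_prod_range, Nat.cast_prod, gfun]
  refine Finset.prod_congr rfl fun i _ => ?_
  rcases le_or_gt i n with h | h
  · rw [max_eq_left (by push_cast [Nat.cast_sub h]; simp [sub_nonneg]; exact_mod_cast h)]
    push_cast [Nat.cast_sub h]; ring
  · rw [Nat.sub_eq_zero_of_le h.le, max_eq_right]
    · simp
    · have : (n : ℝ) < i := by exact_mod_cast h
      linarith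

lemma descPoch_eq_prod (t : ℕ) (x : ℝ) :
    (descPochhammer ℝ t).eval x = ∏ i ∈ range t, (x - i) := by
  induction t with
  | zero => simp
  | succ n ih => rw [descPochhammer_succ_eval, ih, Finset.prod_range_succ]

lemma gfun_eq_descPoch (t : ℕ) (x : ℝ) (hx : (t : ℝ) ≤ x + 1) :
    gfun t x = (descPochhammer ℝ t).eval x := by
  rw [descPoch_eq_prod, gfun]
  refine Finset.prod_congr rfl fun i hi => ?_
  rw [Finset.mem_range] at hi
  have : (i : ℝ) + 1 ≤ t := by exact_mod_cast hi
  exact max_eq_left (by linarith)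


/-- Let `G = (A,B;E)` be a bipartite graph with edge density `λ` and `λ|B| ≥ t`. Then the
average, over all `t`-subsets `S ⊆ B`, of the size of the common neighbourhood `N(S)` is at
least `|A| · C(λ|B|, t) / C(|B|, t)`; equivalently, the sum over `t`-subsets `S` of `|N(S)|`
is at least `|A| · C(λ|B|, t)`, where `C(x, t) = x(x-1)⋯(x-t+1)/t!` is the generalized
binomial coefficient. -/
theorem stmt_6 (t : ℕ) (ht : 1 ≤ t) {A B : Type} [Fintype A] [Fintype B]
    (E : A → B → Prop) (lam : ℝ)
    (hdens : ((Finset.univ.filter fun p : A × B => E p.1 p.2).card : ℝ) =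
      lam * (Fintype.card A : ℝ) * (Fintype.card B : ℝ))
    (hlamB : (t : ℝ) ≤ lam * (Fintype.card B : ℝ)) :
    (Fintype.card A : ℝ) *
        ((descPochhammer ℝ t).eval (lam * (Fintype.card B : ℝ)) / (Nat.factorial t : ℝ)) ≤
      ∑ S ∈ Finset.univ.powersetCard t (α := B),
        ((Finset.univ.filter fun a : A => ∀ b ∈ S, E a b).card : ℝ) := by
  classical
  set x : ℝ := lam * (Fintype.card B : ℝ) with hx
  set d : A → ℕ := fun a => (Finset.univ.filter fun b : B => E a b).card with hd
  -- double counting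
  have hnat : ∑ S ∈ Finset.univ.powersetCard t (α := B),
      (Finset.univ.filter fun a : A => ∀ b ∈ S, E a b).card
      = ∑ a : A, (d a).choose t := by
    simp_rw [Finset.card_filter]
    rw [Finset.sum_comm]
    refine Finset.sum_congr rfl fun a _ => ?_
    rw [← Finset.card_filter]
    have hset : (Finset.univ.powersetCard t (α := B)).filter (fun S => ∀ b ∈ S, E a b)
        = (Finset.univ.filter fun b : B => E a b).powersetCard t := by
      ext S
      simp only [Finset.mem_filter, Finset.mem_powersetCard, Finset.subset_iff,
        Finset.mem_univ, true_and]
      tauto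
    rw [hset, Finset.card_powersetCard]
  have hedge : ∑ a : A, (d a : ℝ) = x * (Fintype.card A : ℝ) := by
    have : ∑ a : A, d a = (Finset.univ.filter fun p : A × B => E p.1 p.2).card := by
      rw [Finset.card_filter, Fintype.sum_prod_type]
      exact Finset.sum_congr rfl fun a _ => Finset.card_filter _ _
    have h2 : ((∑ a : A, d a : ℕ) : ℝ) = lam * (Fintype.card A : ℝ) * (Fintype.card B : ℝ) := by
      rw [this, hdens]
    push_cast at h2
    rw [h2]; ring
  -- rewrite RHS via gfun
  have hfac : (0 : ℝ) < (Nat.factorial t : ℝ) := by exact_mod_cast Nat.factorial_pos t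
  have hrhs : ∑ S ∈ Finset.univ.powersetCard t (α := B),
      ((Finset.univ.filter fun a : A => ∀ b ∈ S, E a b).card : ℝ)
      = (∑ a : A, gfun t (d a)) / (Nat.factorial t : ℝ) := by
    rw [← Nat.cast_sum, hnat, Finset.sum_div]
    push_cast
    refine Finset.sum_congr rfl fun a _ => ?_
    rw [gfun_nat, Nat.descFactorial_eq_factorial_mul_choose]
    push_cast
    field_simp
  rw [hrhs]
  rcases Nat.eq_zero_or_pos (Fintype.card A) with h0 | hpos
  · rw [h0]
    simp only [Nat.cast_zero, zero_mul]
    apply div_nonneg _ hfac.le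
    exact Finset.sum_nonneg fun a _ => gfun_nonneg t _
  · have hn : (0 : ℝ) < (Fintype.card A : ℝ) := by exact_mod_cast hpos
    have hw : ∑ _a : A, ((Fintype.card A : ℝ))⁻¹ = 1 := by
      rw [Finset.sum_const, Finset.card_univ, nsmul_eq_mul, mul_inv_cancel₀ hn.ne']
    have jensen := (gfun_convex t).map_sum_le
      (w := fun _ : A => ((Fintype.card A : ℝ))⁻¹)
      (p := fun a : A => ((d a : ℕ) : ℝ)) (t := Finset.univ)
      (fun _ _ => by positivity) hw (fun _ _ => Set.mem_univ _)
    have hsumpt : ∑ a : A, ((Fintype.card A : ℝ))⁻¹ • ((d a : ℕ) : ℝ) = x := by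
      simp only [smul_eq_mul, ← Finset.mul_sum]
      rw [hedge]
      field_simp
    rw [hsumpt] at jensen
    have hgx : gfun t x = (descPochhammer ℝ t).eval x := gfun_eq_descPoch t x (by linarith)
    have key : (Fintype.card A : ℝ) * (descPochhammer ℝ t).eval x ≤ ∑ a : A, gfun t (d a) := by
      rw [← hgx]
      have : ∑ a : A, ((Fintype.card A : ℝ))⁻¹ • gfun t ((d a : ℕ) : ℝ)
          = ((Fintype.card A : ℝ))⁻¹ * ∑ a : A, gfun t (d a) := by
        simp [smul_eq_mul, ← Finset.mul_sum]
      rw [this] at jensen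
      calc (Fintype.card A : ℝ) * gfun t x
          ≤ (Fintype.card A : ℝ) * (((Fintype.card A : ℝ))⁻¹ * ∑ a : A, gfun t (d a)) :=
            by exact mul_le_mul_of_nonneg_left jensen hn.le
        _ = ∑ a : A, gfun t (d a) := by field_simp
    rw [mul_div_assoc'] at *
    exact div_le_div_of_nonneg_right key hfac.le
end

section
/- Let G be an n × n × n tripartite graph with minimum degree at least n + τ, with functions f⁺, f⁻ as in the booster setup. If uv is an r-booster forward edge and V_i is the part containing neither u nor v, then the number of vertices of V_i adjacent to neither u nor v is at most deg(u,v) − τ − r, where deg(u,v) is the number of common neighbours of u and v. -/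
open scoped Classical

/-- In an `n × n × n` tripartite graph with minimum degree at least `n + τ`, equipped with
`f⁺, f⁻` as in the booster setup, for every `r`-booster forward edge `uv` the number of
vertices of the third part adjacent to neither `u` nor `v` is at most `deg(u,v) - τ - r`. -/
theorem stmt_8 (n τ r : ℕ) {V : Type} [Fintype V] (G : SimpleGraph V) (P : V → Fin 3)
    (hparts : ∀ i : Fin 3, (Finset.univ.filter fun v => P v = i).card = n)
    (htrip : ∀ u v, G.Adj u v → P u ≠ P v)
    (hdeg : ∀ v, n + τ ≤ G.degree v)
    (fp fm : V → ℕ)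
    (hfp : ∀ v, τ ≤ fp v ∧ fp v ≤ (Finset.univ.filter fun w => G.Adj v w ∧ P w = P v + 1).card)
    (hfm : ∀ v, τ ≤ fm v ∧ fm v ≤ (Finset.univ.filter fun w => G.Adj v w ∧ P w = P v + 2).card)
    (hsum : ∀ v, fp v + fm v = n + τ)
    (u v : V) (huv : G.Adj u v) (hfor : P v = P u + 1)
    (hboost : fp u + r ≤ fp v) :
    ((Finset.univ.filter fun w : V => P w = P u + 2 ∧ ¬G.Adj u w ∧ ¬G.Adj v w).card : ℤ) ≤
      ((Finset.univ.filter fun w : V => G.Adj u w ∧ G.Adj v w ∧ P w = P u + 2).card : ℤ)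
        - (τ : ℤ) - (r : ℤ) := by
  classical
  have h21 : P v + 1 = P u + 2 := by
    rw [hfor, add_assoc]
    norm_num
    rfl
  set W := Finset.univ.filter fun w : V => P w = P u + 2 with hW
  set A := W.filter (fun w => G.Adj u w) with hA
  set B := W.filter (fun w => G.Adj v w) with hB
  have hS00 : (Finset.univ.filter fun w : V => P w = P u + 2 ∧ ¬G.Adj u w ∧ ¬G.Adj v w)
      = W \ (A ∪ B) := by
    ext w
    simp only [hW, hA, hB, Finset.mem_filter, Finset.mem_sdiff, Finset.mem_union,
      Finset.mem_univ, true_and]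
    tauto
  have hS11 : (Finset.univ.filter fun w : V => G.Adj u w ∧ G.Adj v w ∧ P w = P u + 2)
      = A ∩ B := by
    ext w
    simp only [hW, hA, hB, Finset.mem_filter, Finset.mem_inter, Finset.mem_univ, true_and]
    tauto
  have hunion : A ∪ B ⊆ W :=
    Finset.union_subset (Finset.filter_subset _ _) (Finset.filter_subset _ _)
  have hcard1 : (W \ (A ∪ B)).card = W.card - (A ∪ B).card := Finset.card_sdiff_of_subset hunion
  have hcard2 : (A ∪ B).card + (A ∩ B).card = A.card + B.card :=
    Finset.card_union_add_card_inter A B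
  have hAcard : fm u ≤ A.card := by
    refine (hfm u).2.trans (le_of_eq ?_)
    congr 1
    ext w
    simp only [hW, hA, Finset.mem_filter, Finset.mem_univ, true_and]
    tauto
  have hBcard : fp v ≤ B.card := by
    refine (hfp v).2.trans (le_of_eq ?_)
    congr 1
    ext w
    simp only [hW, hB, h21, Finset.mem_filter, Finset.mem_univ, true_and]
    tauto
  have hWcard : W.card = n := hparts _
  have hle : (A ∪ B).card ≤ W.card := Finset.card_le_card hunion
  have hsumu := hsum u
  rw [hS00, hS11, hcard1]
  omega
end

section
/- Suppose there are positive constants c, C such that c·n^{2−1/t} ≤ z(n; t) ≤ C·n^{2−1/t} for all n, where z(n;t) is the maximum number of edges in an n × n bipartite graph with no K_{t,t}. Then for any σ ≤ (c/(4C))·n there exists a σ × n bipartite graph containing no K_{t,t} in which every vertex in the part of size σ has degree at least (c/4)·n^{1−1/t}. -/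
open scoped Classical

/-- A bipartite graph (given by a relation `E`) contains `K_{t,t}`. -/
def hasKtt {α β : Type} (E : α → β → Prop) (t : ℕ) : Prop :=
  ∃ (S : Finset α) (T : Finset β), S.card = t ∧ T.card = t ∧ ∀ a ∈ S, ∀ b ∈ T, E a b

/-- The number of edges of a bipartite graph given by a relation `E`. -/
noncomputable def edgeCount {α β : Type} [Fintype α] [Fintype β] (E : α → β → Prop) : ℕ :=
  (Finset.univ.filter fun p : α × β => E p.1 p.2).card

section AuxStmt13
open Finset

lemma edgeCount_eq_sum {α β : Type} [Fintype α] [Fintype β] (E : α → β → Prop) :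
    edgeCount E = ∑ i : α, (univ.filter fun b => E i b).card := by
  classical
  unfold edgeCount
  rw [Finset.card_filter, Fintype.sum_prod_type]
  exact Finset.sum_congr rfl fun i _ => (Finset.card_filter _ _).symm

lemma edgeCount_le {α β : Type} [Fintype α] [Fintype β] (E : α → β → Prop) :
    edgeCount E ≤ Fintype.card α * Fintype.card β := by
  classical
  calc edgeCount E ≤ (univ : Finset (α × β)).card := Finset.card_filter_le _ _
  _ = _ := by simp [Fintype.card_prod]

lemma key_count {n : ℕ} (t : ℕ) (ht : 1 ≤ t) (G : Fin n → Fin n → Prop) (hG : ¬ hasKtt G t)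
    (A : Finset (Fin n)) :
    ∑ j : Fin n, ((A.filter fun i => G i j).card.choose t) ≤ (t - 1) * A.card.choose t := by
  classical
  have h1 : ∀ j : Fin n, (A.filter fun i => G i j).card.choose t
      = ((A.powersetCard t).filter fun T => ∀ i ∈ T, G i j).card := by
    intro j
    rw [← Finset.card_powersetCard]
    congr 1
    ext T
    simp only [Finset.mem_powersetCard, Finset.mem_filter, Finset.subset_iff,
      Finset.mem_filter]
    constructor
    · rintro ⟨hs, hc⟩
      exact ⟨⟨fun x hx => (hs hx).1, hc⟩, fun i hi => (hs hi).2⟩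
    · rintro ⟨⟨hs, hc⟩, hg⟩
      exact ⟨fun x hx => ⟨hs hx, hg x hx⟩, hc⟩
  have h2 : ∀ T ∈ A.powersetCard t,
      (univ.filter fun j : Fin n => ∀ i ∈ T, G i j).card ≤ t - 1 := by
    intro T hT
    by_contra hcon
    push_neg at hcon
    have hTcard : T.card = t := (Finset.mem_powersetCard.mp hT).2
    have ht' : t ≤ (univ.filter fun j : Fin n => ∀ i ∈ T, G i j).card := by omega
    obtain ⟨T', hT'sub, hT'card⟩ := Finset.exists_subset_card_eq ht'
    exact hG ⟨T, T', hTcard, hT'card, fun i hi b hb => (Finset.mem_filter.mp (hT'sub hb)).2 i hi⟩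
  calc ∑ j : Fin n, ((A.filter fun i => G i j).card.choose t)
      = ∑ j : Fin n, ∑ T ∈ A.powersetCard t, if (∀ i ∈ T, G i j) then 1 else 0 := by
        refine Finset.sum_congr rfl fun j _ => ?_
        rw [h1 j, Finset.card_filter]
    _ = ∑ T ∈ A.powersetCard t, (univ.filter fun j : Fin n => ∀ i ∈ T, G i j).card := by
        rw [Finset.sum_comm]
        exact Finset.sum_congr rfl fun T _ => (Finset.card_filter _ _).symm
    _ ≤ ∑ T ∈ A.powersetCard t, (t - 1) := Finset.sum_le_sum h2
    _ = (A.powersetCard t).card * (t - 1) := by rw [Finset.sum_const, smul_eq_mul]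
    _ = (t - 1) * A.card.choose t := by rw [Finset.card_powersetCard, Nat.mul_comm]

lemma card_filter_val_lt (n k : ℕ) (h : k ≤ n) :
    ((univ : Finset (Fin n)).filter fun b : Fin n => (b : ℕ) < k).card = k := by
  classical
  conv_rhs => rw [← Finset.card_range k]
  apply Finset.card_bij (fun (b : Fin n) _ => (b : ℕ))
  · intro b hb
    simp only [Finset.mem_filter] at hb
    simpa using hb.2
  · intro a _ b _ hab
    exact Fin.val_injective hab
  · intro m hm
    simp only [Finset.mem_range] at hm
    exact ⟨⟨m, lt_of_lt_of_le hm h⟩, by simp [hm], rfl⟩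

lemma card_filter_val_lt_le (n k : ℕ) :
    ((univ : Finset (Fin n)).filter fun b : Fin n => (b : ℕ) < k).card ≤ k := by
  classical
  conv_rhs => rw [← Finset.card_range k]
  apply Finset.card_le_card_of_injOn (fun (b : Fin n) => (b : ℕ))
  · intro b hb
    simp only [Finset.mem_coe, Finset.mem_filter] at hb
    simpa using hb.2
  · intro a _ b _ hab
    exact Fin.val_injective hab
end AuxStmt13

set_option maxHeartbeats 1000000 in
/-- If `c n^{2-1/t} ≤ z(n;t) ≤ C n^{2-1/t}` for all `n`, then for any `σ ≤ (c/4C) n` there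
is a `σ × n` bipartite graph with no `K_{t,t}` in which every vertex of the part of size
`σ` has degree at least `(c/4) n^{1-1/t}`. -/
theorem stmt_13 (t : ℕ) (ht : 1 ≤ t) (c C : ℝ) (hc : 0 < c) (hC : 0 < C)
    (hlower : ∀ n : ℕ, ∃ E : Fin n → Fin n → Prop, ¬hasKtt E t ∧
      c * (n : ℝ) ^ (2 - 1 / (t : ℝ)) ≤ (edgeCount E : ℝ))
    (hupper : ∀ n : ℕ, ∀ E : Fin n → Fin n → Prop, ¬hasKtt E t →
      (edgeCount E : ℝ) ≤ C * (n : ℝ) ^ (2 - 1 / (t : ℝ)))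
    (n σ : ℕ) (hσ : (σ : ℝ) ≤ c / (4 * C) * (n : ℝ)) :
    ∃ E : Fin σ → Fin n → Prop, ¬hasKtt E t ∧
      ∀ a : Fin σ, c / 4 * (n : ℝ) ^ (1 - 1 / (t : ℝ)) ≤
        ((Finset.univ.filter fun b : Fin n => E a b).card : ℝ) := by
  classical
  have htR : (1:ℝ) ≤ (t:ℝ) := by exact_mod_cast ht
  have htpos : (0:ℝ) < (t:ℝ) := by linarith
  have hc1 : c ≤ 1 := by
    obtain ⟨E1, hK1, hcnt⟩ := hlower 1
    have h2 : (edgeCount E1 : ℝ) ≤ 1 := by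
      have := edgeCount_le E1
      simp only [Fintype.card_fin, mul_one] at this
      exact_mod_cast this
    calc c = c * (1:ℝ) ^ (2 - 1/(t:ℝ)) := by rw [Real.one_rpow]; ring
      _ ≤ (edgeCount E1 : ℝ) := by exact_mod_cast hcnt
      _ ≤ 1 := h2
  rcases eq_or_lt_of_le ht with ht1 | ht2
  · -- t = 1 : hypotheses contradictory
    exfalso
    obtain ⟨E1, hK1, hcnt⟩ := hlower 1
    have hpos : 0 < edgeCount E1 := by
      by_contra h
      push_neg at h
      have h0 : edgeCount E1 = 0 := by omega
      rw [h0] at hcnt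
      have h1 : (1:ℝ) ^ (2 - 1/(t:ℝ)) = 1 := Real.one_rpow _
      simp only [Nat.cast_zero, Nat.cast_one, h1, mul_one] at hcnt
      linarith
    obtain ⟨p, hp⟩ := Finset.card_pos.mp hpos
    have hpE : E1 p.1 p.2 := (Finset.mem_filter.mp hp).2
    exact hK1 ⟨{p.1}, {p.2}, by simp [← ht1], by simp [← ht1],
      by intro a ha b hb; simp at ha hb; rw [ha, hb]; exact hpE⟩
  -- t ≥ 2
  by_cases hσ0 : σ = 0
  · subst hσ0
    refine ⟨fun _ _ => False, ?_, fun a => a.elim0⟩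
    rintro ⟨S, T, hS, -, -⟩
    have hle := Finset.card_le_card (Finset.subset_univ S)
    simp only [Finset.card_univ, Fintype.card_fin] at hle
    omega
  have hσ1 : 1 ≤ σ := Nat.one_le_iff_ne_zero.mpr hσ0
  have hn0 : 0 < n := by
    rcases Nat.eq_zero_or_pos n with h | h
    · exfalso
      subst h
      simp only [Nat.cast_zero, mul_zero] at hσ
      have : (1:ℝ) ≤ (σ:ℝ) := by exact_mod_cast hσ1
      linarith
    · exact h
  have hN1 : (1:ℝ) ≤ (n:ℝ) := by exact_mod_cast hn0
  have hN0 : (0:ℝ) < (n:ℝ) := by linarith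
  have hX0 : (0:ℝ) ≤ (n:ℝ) ^ (1 - 1/(t:ℝ)) := Real.rpow_nonneg hN0.le _
  have hrp1 : (n:ℝ) ^ (1 - 1/(t:ℝ)) * (n:ℝ) = (n:ℝ) ^ (2 - 1/(t:ℝ)) := by
    calc (n:ℝ) ^ (1 - 1/(t:ℝ)) * (n:ℝ) = (n:ℝ) ^ (1 - 1/(t:ℝ)) * (n:ℝ) ^ (1:ℝ) := by
          rw [Real.rpow_one]
      _ = (n:ℝ) ^ (1 - 1/(t:ℝ) + 1) := (Real.rpow_add hN0 _ _).symm
      _ = (n:ℝ) ^ (2 - 1/(t:ℝ)) := by congr 1; ring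
  rcases le_or_gt ((t:ℝ) - 1) (c/2 * (n:ℝ) ^ (1 - 1/(t:ℝ))) with hcase | hcase
  · -- MAIN CASE
    obtain ⟨G, hG, hGe⟩ := hlower n
    set dg : Fin n → ℕ := fun i => (Finset.univ.filter fun b => G i b).card with hdg
    set A : Finset (Fin n) := Finset.univ.filter
      (fun i => c/4 * (n:ℝ) ^ (1 - 1/(t:ℝ)) ≤ (dg i : ℝ)) with hA
    suffices hσa : σ ≤ A.card by
      obtain ⟨B, hBA, hBc⟩ := Finset.exists_subset_card_eq hσa
      let ι : Fin σ → Fin n := fun i => (B.equivFin.symm (Fin.cast hBc.symm i) : {x // x ∈ B}).1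
      have hι_inj : Function.Injective ι := by
        intro i j hij
        have h1 : B.equivFin.symm (Fin.cast hBc.symm i) = B.equivFin.symm (Fin.cast hBc.symm j) :=
          Subtype.val_injective hij
        have h2 := B.equivFin.symm.injective h1
        exact Fin.cast_injective _ h2
      have hιA : ∀ i, ι i ∈ A := fun i => hBA (B.equivFin.symm (Fin.cast hBc.symm i)).2
      refine ⟨fun i b => G (ι i) b, ?_, ?_⟩
      · rintro ⟨S, T, hS, hT, hST⟩
        refine hG ⟨S.image ι, T, ?_, hT, ?_⟩
        · rw [Finset.card_image_of_injective _ hι_inj, hS]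
        · rintro x hx b hb
          obtain ⟨i, hi, rfl⟩ := Finset.mem_image.mp hx
          exact hST i hi b hb
      · intro i
        exact (Finset.mem_filter.mp (hιA i)).2
    -- counting
    set x : Fin n → ℕ := fun j => (A.filter fun i => G i j).card with hx
    set w : Fin n → ℕ := fun j => x j + 1 - t with hw
    have hEdeg : (edgeCount G : ℝ) = ∑ i : Fin n, (dg i : ℝ) := by
      rw [edgeCount_eq_sum]; push_cast; rfl
    have hsplit : ∑ i : Fin n, (dg i:ℝ) = ∑ i ∈ A, (dg i:ℝ) + ∑ i ∈ Aᶜ, (dg i:ℝ) :=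
      (Finset.sum_add_sum_compl A _).symm
    have hd0 : (0:ℝ) ≤ c/4 * (n:ℝ) ^ (1 - 1/(t:ℝ)) := by positivity
    have hlowdeg : ∑ i ∈ Aᶜ, (dg i:ℝ) ≤ (n:ℝ) * (c/4 * (n:ℝ) ^ (1 - 1/(t:ℝ))) := by
      calc ∑ i ∈ Aᶜ, (dg i:ℝ) ≤ ∑ i ∈ Aᶜ, (c/4 * (n:ℝ) ^ (1 - 1/(t:ℝ))) := by
            refine Finset.sum_le_sum fun i hi => ?_
            have hni : i ∉ A := Finset.mem_compl.mp hi
            rw [hA, Finset.mem_filter] at hni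
            push_neg at hni
            exact (hni (Finset.mem_univ i)).le
        _ = (Aᶜ.card : ℝ) * (c/4 * (n:ℝ) ^ (1 - 1/(t:ℝ))) := by
            rw [Finset.sum_const, nsmul_eq_mul]
        _ ≤ (n:ℝ) * (c/4 * (n:ℝ) ^ (1 - 1/(t:ℝ))) := by
            have hcc : Aᶜ.card ≤ n := by
              have := Finset.card_le_univ Aᶜ
              simpa using this
            exact mul_le_mul_of_nonneg_right (by exact_mod_cast hcc) hd0
    have hnd : (n:ℝ) * (c/4 * (n:ℝ) ^ (1 - 1/(t:ℝ))) = c/4 * (n:ℝ) ^ (2 - 1/(t:ℝ)) := by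
      calc (n:ℝ) * (c/4 * (n:ℝ) ^ (1 - 1/(t:ℝ)))
          = c/4 * ((n:ℝ) ^ (1 - 1/(t:ℝ)) * (n:ℝ)) := by ring
        _ = c/4 * (n:ℝ) ^ (2 - 1/(t:ℝ)) := by rw [hrp1]
    have heA : 3*c/4 * (n:ℝ) ^ (2 - 1/(t:ℝ)) ≤ ∑ i ∈ A, (dg i:ℝ) := by
      have h1 : c * (n:ℝ) ^ (2 - 1/(t:ℝ)) ≤ ∑ i ∈ A, (dg i:ℝ) + ∑ i ∈ Aᶜ, (dg i:ℝ) := by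
        rw [← hsplit, ← hEdeg]; exact hGe
      rw [hnd] at hlowdeg
      linarith
    have hswap : ∑ i ∈ A, dg i = ∑ j : Fin n, x j := by
      calc ∑ i ∈ A, dg i = ∑ i ∈ A, ∑ j : Fin n, if G i j then 1 else 0 :=
            Finset.sum_congr rfl fun i _ => Finset.card_filter _ _
        _ = ∑ j : Fin n, ∑ i ∈ A, if G i j then 1 else 0 := Finset.sum_comm
        _ = ∑ j : Fin n, x j :=
            Finset.sum_congr rfl fun j _ => (Finset.card_filter _ _).symm
    have hwlb : ∀ j, (x j : ℝ) - ((t:ℝ)-1) ≤ (w j : ℝ) := by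
      intro j
      rcases le_or_gt t (x j + 1) with h | h
      · have : w j = x j + 1 - t := rfl
        rw [this]
        rw [Nat.cast_sub h]
        push_cast
        linarith
      · have h1 : (x j : ℝ) ≤ (t:ℝ) - 1 := by
          have : x j ≤ t - 1 := by omega
          have h2 : ((x j:ℕ):ℝ) ≤ ((t-1:ℕ):ℝ) := by exact_mod_cast this
          rwa [Nat.cast_sub ht, Nat.cast_one] at h2
        have h3 : (0:ℝ) ≤ (w j : ℝ) := by positivity
        linarith
    have hSum_w_lb : c/4 * (n:ℝ) ^ (2 - 1/(t:ℝ)) ≤ ∑ j : Fin n, (w j:ℝ) := by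
      have h1 : ∑ j : Fin n, ((x j:ℝ) - ((t:ℝ)-1)) ≤ ∑ j : Fin n, (w j:ℝ) :=
        Finset.sum_le_sum fun j _ => hwlb j
      have h2 : ∑ j : Fin n, ((x j:ℝ) - ((t:ℝ)-1))
          = (∑ j : Fin n, (x j:ℝ)) - (n:ℝ)*((t:ℝ)-1) := by
        rw [Finset.sum_sub_distrib, Finset.sum_const, Finset.card_univ, Fintype.card_fin,
          nsmul_eq_mul]
      have h3 : (∑ j : Fin n, (x j:ℝ)) = ∑ i ∈ A, (dg i:ℝ) := by
        exact_mod_cast hswap.symm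
      have h4 : (n:ℝ) * ((t:ℝ)-1) ≤ c/2 * (n:ℝ) ^ (2 - 1/(t:ℝ)) := by
        calc (n:ℝ)*((t:ℝ)-1) ≤ (n:ℝ) * (c/2 * (n:ℝ) ^ (1 - 1/(t:ℝ))) :=
              mul_le_mul_of_nonneg_left hcase hN0.le
          _ = c/2 * ((n:ℝ) ^ (1 - 1/(t:ℝ)) * (n:ℝ)) := by ring
          _ = c/2 * (n:ℝ) ^ (2 - 1/(t:ℝ)) := by rw [hrp1]
      linarith
    have hwpow : ∑ j : Fin n, (w j)^t ≤ (t-1) * A.card^t := by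
      have h1 : ∀ j, (w j)^t ≤ t.factorial * (x j).choose t := by
        intro j
        calc (w j)^t = (x j + 1 - t)^t := rfl
          _ ≤ (x j).descFactorial t := Nat.pow_sub_le_descFactorial _ _
          _ = t.factorial * (x j).choose t := Nat.descFactorial_eq_factorial_mul_choose _ _
      calc ∑ j : Fin n, (w j)^t ≤ ∑ j : Fin n, t.factorial * (x j).choose t :=
            Finset.sum_le_sum fun j _ => h1 j
        _ = t.factorial * ∑ j : Fin n, (x j).choose t := (Finset.mul_sum _ _ _).symm
        _ ≤ t.factorial * ((t-1) * A.card.choose t) :=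
            Nat.mul_le_mul_left _ (key_count t ht G hG A)
        _ = (t-1) * (t.factorial * A.card.choose t) := by ring
        _ = (t-1) * A.card.descFactorial t := by
            rw [Nat.descFactorial_eq_factorial_mul_choose]
        _ ≤ (t-1) * A.card^t := Nat.mul_le_mul_left _ (Nat.descFactorial_le_pow _ _)
    have hpm : (∑ j : Fin n, (w j:ℝ))^t ≤ (n:ℝ)^(t-1) * ∑ j : Fin n, ((w j:ℝ))^t := by
      have hh := pow_sum_div_card_le_sum_pow (s := (Finset.univ : Finset (Fin n)))
        (f := fun j => (w j : ℝ)) (fun i _ => by positivity) (t-1)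
      rw [Nat.sub_add_cancel ht, Finset.card_univ, Fintype.card_fin] at hh
      rw [div_le_iff₀ (by positivity)] at hh
      linarith
    -- (t-1 : ℝ) ≤ C^t
    have hCt : ((t:ℝ) - 1) ≤ C^t := by
      have hnoK : ¬ hasKtt (fun (_ _ : Fin (t-1)) => True) t := by
        rintro ⟨S, T, hS, -, -⟩
        have hle := Finset.card_le_card (Finset.subset_univ S)
        simp only [Finset.card_univ, Fintype.card_fin] at hle
        omega
      have hcnt : edgeCount (fun (_ _ : Fin (t-1)) => True) = (t-1) * (t-1) := by
        unfold edgeCount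
        simp [Finset.card_univ]
      have hup := hupper (t-1) _ hnoK
      rw [hcnt] at hup
      set s : ℝ := ((t-1:ℕ):ℝ) with hs
      have hs1 : (1:ℝ) ≤ s := by
        rw [hs]
        exact_mod_cast Nat.one_le_iff_ne_zero.mpr (by omega)
      have hs0 : (0:ℝ) < s := by linarith
      have hup2 : s * s ≤ C * s ^ (2 - 1/(t:ℝ)) := by
        convert hup using 2
        push_cast
        ring
      have hsplit2 : s ^ (2 - 1/(t:ℝ)) * s ^ ((1:ℝ)/(t:ℝ)) = s * s := by
        rw [← Real.rpow_add hs0]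
        have : 2 - 1/(t:ℝ) + 1/(t:ℝ) = 2 := by ring
        rw [this]
        rw [show (2:ℝ) = ((2:ℕ):ℝ) by norm_num, Real.rpow_natCast]
        ring
      have hC1 : s ^ ((1:ℝ)/(t:ℝ)) ≤ C := by
        have hpos2 : (0:ℝ) < s ^ (2 - 1/(t:ℝ)) := Real.rpow_pos_of_pos hs0 _
        rw [← hsplit2] at hup2
        have h' : s ^ (2 - 1/(t:ℝ)) * s ^ ((1:ℝ)/(t:ℝ)) ≤ s ^ (2 - 1/(t:ℝ)) * C := by
          calc s ^ (2 - 1/(t:ℝ)) * s ^ ((1:ℝ)/(t:ℝ)) ≤ C * s ^ (2 - 1/(t:ℝ)) := hup2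
            _ = s ^ (2 - 1/(t:ℝ)) * C := mul_comm _ _
        exact le_of_mul_le_mul_left h' hpos2
      have hfin : s ≤ C^t := by
        have h5 : (s ^ ((1:ℝ)/(t:ℝ)))^t ≤ C^t :=
          pow_le_pow_left₀ (Real.rpow_nonneg hs0.le _) hC1 t
        have h6 : (s ^ ((1:ℝ)/(t:ℝ)))^t = s := by
          rw [← Real.rpow_natCast (s ^ ((1:ℝ)/(t:ℝ))) t, ← Real.rpow_mul hs0.le]
          rw [one_div_mul_cancel (ne_of_gt htpos), Real.rpow_one]
        rwa [h6] at h5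
      calc ((t:ℝ) - 1) = s := by rw [hs]; push_cast [Nat.cast_sub ht]; ring
        _ ≤ C^t := hfin
    -- final chain
    have haR : (0:ℝ) ≤ (A.card:ℝ) := Nat.cast_nonneg _
    have hwpowR : ∑ j : Fin n, ((w j:ℝ))^t ≤ ((t:ℝ)-1) * ((A.card:ℝ))^t := by
      have h7 : (((∑ j : Fin n, (w j)^t : ℕ)):ℝ) ≤ (((t-1) * A.card^t : ℕ):ℝ) := by
        exact_mod_cast hwpow
      push_cast [Nat.cast_sub ht] at h7
      exact h7
    have hP0 : (0:ℝ) ≤ c/4 * (n:ℝ) ^ (2 - 1/(t:ℝ)) := by positivity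
    have hchain : (c/4 * (n:ℝ) ^ (2 - 1/(t:ℝ)))^t ≤ (n:ℝ)^(t-1) * (C^t * (A.card:ℝ)^t) := by
      calc (c/4 * (n:ℝ) ^ (2 - 1/(t:ℝ)))^t ≤ (∑ j : Fin n, (w j:ℝ))^t :=
            pow_le_pow_left₀ hP0 hSum_w_lb t
        _ ≤ (n:ℝ)^(t-1) * ∑ j : Fin n, ((w j:ℝ))^t := hpm
        _ ≤ (n:ℝ)^(t-1) * (((t:ℝ)-1) * (A.card:ℝ)^t) :=
            mul_le_mul_of_nonneg_left hwpowR (by positivity)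
        _ ≤ (n:ℝ)^(t-1) * (C^t * (A.card:ℝ)^t) := by
            apply mul_le_mul_of_nonneg_left _ (by positivity)
            exact mul_le_mul_of_nonneg_right hCt (by positivity)
    have hLHS : (c/4 * (n:ℝ) ^ (2 - 1/(t:ℝ)))^t = (c/4)^t * ((n:ℝ)^(t-1) * (n:ℝ)^t) := by
      rw [mul_pow]
      congr 1
      have e2 : ((n:ℝ) ^ (2 - 1/(t:ℝ)))^t = (n:ℝ) ^ ((2 - 1/(t:ℝ)) * (t:ℕ)) := by
        rw [← Real.rpow_natCast ((n:ℝ) ^ (2 - 1/(t:ℝ))) t, ← Real.rpow_mul hN0.le]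
      rw [e2]
      have e3 : (2 - 1/(t:ℝ)) * ((t:ℕ):ℝ) = ((t-1:ℕ):ℝ) + ((t:ℕ):ℝ) := by
        push_cast [Nat.cast_sub ht]
        field_simp
        ring
      rw [e3, Real.rpow_add hN0, Real.rpow_natCast, Real.rpow_natCast]
    have hmain : (c/4)^t * (n:ℝ)^t ≤ C^t * (A.card:ℝ)^t := by
      have hpow : (0:ℝ) < (n:ℝ)^(t-1) := by positivity
      rw [hLHS] at hchain
      have h11 : (n:ℝ)^(t-1) * ((c/4)^t * (n:ℝ)^t) ≤ (n:ℝ)^(t-1) * (C^t * (A.card:ℝ)^t) := by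
        calc (n:ℝ)^(t-1) * ((c/4)^t * (n:ℝ)^t) = (c/4)^t * ((n:ℝ)^(t-1) * (n:ℝ)^t) := by ring
          _ ≤ (n:ℝ)^(t-1) * (C^t * (A.card:ℝ)^t) := hchain
      exact le_of_mul_le_mul_left h11 hpow
    have hfinal : c/4 * (n:ℝ) ≤ C * (A.card:ℝ) := by
      have h8 : (c/4 * (n:ℝ))^t ≤ (C * (A.card:ℝ))^t := by
        rw [mul_pow, mul_pow]
        exact hmain
      have h9 : (0:ℝ) ≤ c/4 * (n:ℝ) := by positivity
      have h10 : (0:ℝ) ≤ C * (A.card:ℝ) := by positivity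
      exact le_of_pow_le_pow_left₀ (by omega) h10 h8
    have hres : (σ:ℝ) ≤ (A.card:ℝ) := by
      have hσ' : (σ:ℝ) * (4*C) ≤ c * (n:ℝ) := by
        have : c / (4*C) * (n:ℝ) * (4*C) = c * (n:ℝ) := by field_simp
        nlinarith
      nlinarith
    exact_mod_cast hres
  · -- SMALL CASE : d ≤ (t-1)/2
    have hdle : c/4 * (n:ℝ) ^ (1 - 1/(t:ℝ)) ≤ (t:ℝ) - 1 := by nlinarith
    by_cases hnt : n < t
    · refine ⟨fun _ _ => True, ?_, ?_⟩
      · rintro ⟨-, T, -, hT, -⟩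
        have hle := Finset.card_le_card (Finset.subset_univ T)
        simp only [Finset.card_univ, Fintype.card_fin] at hle
        omega
      · intro i
        have key : ∀ F : Finset (Fin n), (∀ b : Fin n, b ∈ F) →
            c/4 * (n:ℝ) ^ (1 - 1/(t:ℝ)) ≤ (F.card : ℝ) := by
          intro F hF
          have hsub : (Finset.univ : Finset (Fin n)) ⊆ F := fun b _ => hF b
          have hle := Finset.card_le_card hsub
          simp only [Finset.card_univ, Fintype.card_fin] at hle
          have h1 : (n:ℝ) ^ (1 - 1/(t:ℝ)) ≤ (n:ℝ) := by
            calc (n:ℝ) ^ (1 - 1/(t:ℝ)) ≤ (n:ℝ) ^ (1:ℝ) :=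
                  Real.rpow_le_rpow_of_exponent_le hN1 (by
                    have : 0 < 1/(t:ℝ) := by positivity
                    linarith)
              _ = (n:ℝ) := Real.rpow_one _
          have h2 : (n:ℝ) ≤ (F.card : ℝ) := by exact_mod_cast hle
          nlinarith
        exact key _ (fun b => by simp)
    · push_neg at hnt
      refine ⟨fun _ b => (b:ℕ) < t - 1, ?_, ?_⟩
      · rintro ⟨S, T, hS, hT, hST⟩
        have hSne : S.Nonempty := Finset.card_pos.mp (by omega)
        obtain ⟨i, hi⟩ := hSne
        have hsub : T ⊆ Finset.univ.filter fun b : Fin n => (b:ℕ) < t-1 :=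
          fun b hb => Finset.mem_filter.mpr ⟨Finset.mem_univ _, hST i hi b hb⟩
        have h1 := Finset.card_le_card hsub
        have h2 := card_filter_val_lt_le n (t-1)
        omega
      · intro i
        have key : ∀ F : Finset (Fin n), (∀ b : Fin n, (b:ℕ) < t-1 → b ∈ F) →
            c/4 * (n:ℝ) ^ (1 - 1/(t:ℝ)) ≤ (F.card : ℝ) := by
          intro F hF
          have hsub : (Finset.univ.filter fun b : Fin n => (b:ℕ) < t-1) ⊆ F :=
            fun b hb => hF b (Finset.mem_filter.mp hb).2
          have hle := Finset.card_le_card hsub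
          rw [card_filter_val_lt n (t-1) (by omega)] at hle
          have h2 : ((t-1:ℕ):ℝ) ≤ (F.card : ℝ) := by exact_mod_cast hle
          rw [Nat.cast_sub ht, Nat.cast_one] at h2
          linarith [hdle]
        exact key _ (fun b hb => by simp [hb])
end

section
/- Let t ≥ 2 and suppose there exists: (a) an n × n × n triangle-free tripartite graph G₀ with parts V1, V2, V3 containing sets U1 ⊂ V1 and U2 ⊂ V2 of size σ such that every vertex of U1 is adjacent to all of V2, every vertex of U2 is adjacent to all of V1, and every vertex outside U1 ∪ U2 has degree at least n + σ; and (b) a bipartite graph H with parts of sizes σ and n containing no K_{t,t} in which every vertex of the σ-part has degree at least d. Then the graph G obtained from G₀ by adding a copy of H between U1 and V3 and a copy of H between U2 and V3 has minimum degree at least n + min(σ, d) and contains no K_{t,t,t}. -/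
open scoped Classical

/-- Extremal construction: let `G₀` be an `n × n × n` triangle-free tripartite graph with
sets `U1 ⊆ V1`, `U2 ⊆ V2` of size `σ` joined completely to `V2`, `V1` respectively and with
all other degrees at least `n + σ`, and let `H` be a `σ × n` bipartite graph with no
`K_{t,t}` whose `σ`-side degrees are all at least `d`. Then adding a copy of `H` between
`U1` and `V3` and a copy of `H` between `U2` and `V3` yields a graph with minimum degree at
least `n + min σ d` containing no `K_{t,t,t}`. -/
theorem stmt_14 (t σ n d : ℕ) (ht : 2 ≤ t)
    {V : Type} [Fintype V] (G₀ : SimpleGraph V) (P : V → Fin 3)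
    (hparts : ∀ i : Fin 3, (Finset.univ.filter fun v => P v = i).card = n)
    (htrip : ∀ u v, G₀.Adj u v → P u ≠ P v)
    (htf : G₀.CliqueFree 3)
    (U1 U2 : Finset V)
    (hU1P : ∀ v ∈ U1, P v = 0) (hU2P : ∀ v ∈ U2, P v = 1)
    (hU1card : U1.card = σ) (hU2card : U2.card = σ)
    (hU1full : ∀ v ∈ U1, ∀ w, P w = 1 → G₀.Adj v w)
    (hU2full : ∀ v ∈ U2, ∀ w, P w = 0 → G₀.Adj v w)
    (hdeg : ∀ v, v ∉ U1 → v ∉ U2 → n + σ ≤ G₀.degree v)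
    (H : Fin σ → Fin n → Prop)
    (hHfree : ¬∃ (S : Finset (Fin σ)) (T : Finset (Fin n)),
      S.card = t ∧ T.card = t ∧ ∀ a ∈ S, ∀ b ∈ T, H a b)
    (hHdeg : ∀ i : Fin σ, d ≤ (Finset.univ.filter fun j : Fin n => H i j).card)
    (f1 : Fin σ → V) (hf1inj : Function.Injective f1) (hf1 : ∀ i, f1 i ∈ U1)
    (f2 : Fin σ → V) (hf2inj : Function.Injective f2) (hf2 : ∀ i, f2 i ∈ U2)
    (f3 : Fin n → V) (hf3inj : Function.Injective f3) (hf3 : ∀ j, P (f3 j) = 2)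
    (G : SimpleGraph V)
    (hG : G = G₀ ⊔ SimpleGraph.fromRel (fun x y =>
      (∃ i j, x = f1 i ∧ y = f3 j ∧ H i j) ∨ (∃ i j, x = f2 i ∧ y = f3 j ∧ H i j))) :
    (∀ v, n + min σ d ≤ G.degree v) ∧
    ¬∃ S1 S2 S3 : Finset V, S1.card = t ∧ S2.card = t ∧ S3.card = t ∧
      (∀ a ∈ S1, ∀ b ∈ S2, G.Adj a b) ∧
      (∀ a ∈ S1, ∀ c ∈ S3, G.Adj a c) ∧
      (∀ b ∈ S2, ∀ c ∈ S3, G.Adj b c) := by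
  classical
  -- basic part facts
  have hP1 : ∀ i, P (f1 i) = 0 := fun i => hU1P _ (hf1 i)
  have hP2 : ∀ i, P (f2 i) = 1 := fun i => hU2P _ (hf2 i)
  -- G₀ edges are G edges
  have hmk0 : ∀ x y, G₀.Adj x y → G.Adj x y := by
    intro x y h; rw [hG]; simp only [SimpleGraph.sup_adj]; exact Or.inl h
  -- decomposition of G edges
  have hdecomp : ∀ x y, G.Adj x y → G₀.Adj x y ∨
      (∃ i j, x = f1 i ∧ y = f3 j ∧ H i j) ∨ (∃ i j, x = f2 i ∧ y = f3 j ∧ H i j) ∨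
      (∃ i j, y = f1 i ∧ x = f3 j ∧ H i j) ∨ (∃ i j, y = f2 i ∧ x = f3 j ∧ H i j) := by
    intro x y h; rw [hG] at h
    simp only [SimpleGraph.sup_adj, SimpleGraph.fromRel_adj] at h
    rcases h with h | ⟨_, (h | h) | (h | h)⟩
    · exact Or.inl h
    · exact Or.inr (Or.inl h)
    · exact Or.inr (Or.inr (Or.inl h))
    · exact Or.inr (Or.inr (Or.inr (Or.inl h)))
    · exact Or.inr (Or.inr (Or.inr (Or.inr h)))
  -- H edges are G edges
  have hmk1 : ∀ i j, H i j → G.Adj (f1 i) (f3 j) := by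
    intro i j hij; rw [hG]
    simp only [SimpleGraph.sup_adj, SimpleGraph.fromRel_adj]
    refine Or.inr ⟨?_, Or.inl (Or.inl ⟨i, j, rfl, rfl, hij⟩)⟩
    intro he
    have h0 := hP1 i
    rw [he, hf3 j] at h0
    exact absurd h0 (by decide)
  have hmk2 : ∀ i j, H i j → G.Adj (f2 i) (f3 j) := by
    intro i j hij; rw [hG]
    simp only [SimpleGraph.sup_adj, SimpleGraph.fromRel_adj]
    refine Or.inr ⟨?_, Or.inl (Or.inr ⟨i, j, rfl, rfl, hij⟩)⟩
    intro he
    have h0 := hP2 i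
    rw [he, hf3 j] at h0
    exact absurd h0 (by decide)
  -- any G edge joins distinct parts
  have hPadj : ∀ x y, G.Adj x y → P x ≠ P y := by
    intro x y h
    rcases hdecomp x y h with h | ⟨i,j,rfl,rfl,_⟩ | ⟨i,j,rfl,rfl,_⟩ | ⟨i,j,rfl,rfl,_⟩ |
      ⟨i,j,rfl,rfl,_⟩
    · exact htrip _ _ h
    · rw [hP1, hf3]; decide
    · rw [hP2, hf3]; decide
    · rw [hP1, hf3]; decide
    · rw [hP2, hf3]; decide
  -- triangle-freeness of G₀, unfolded
  have htri : ∀ a b c : V, G₀.Adj a b → G₀.Adj a c → G₀.Adj b c → False := by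
    intro a b c h1 h2 h3
    exact htf {a, b, c} (SimpleGraph.is3Clique_triple_iff.mpr ⟨h1, h2, h3⟩)
  -- f1, f2 are bijections onto U1, U2
  have hU1eq : Finset.univ.image f1 = U1 := by
    apply Finset.eq_of_subset_of_card_le
    · intro x hx
      obtain ⟨i, _, rfl⟩ := Finset.mem_image.mp hx
      exact hf1 i
    · rw [Finset.card_image_of_injective _ hf1inj, Finset.card_univ, Fintype.card_fin, hU1card]
  have hU2eq : Finset.univ.image f2 = U2 := by
    apply Finset.eq_of_subset_of_card_le
    · intro x hx
      obtain ⟨i, _, rfl⟩ := Finset.mem_image.mp hx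
      exact hf2 i
    · rw [Finset.card_image_of_injective _ hf2inj, Finset.card_univ, Fintype.card_fin, hU2card]
  constructor
  · -- minimum degree
    intro v
    by_cases hv1 : v ∈ U1
    · obtain ⟨i, _, rfl⟩ := Finset.mem_image.mp (hU1eq ▸ hv1)
      have hsub : (Finset.univ.filter fun w => P w = 1) ∪
          ((Finset.univ.filter fun j => H i j).image f3) ⊆ G.neighborFinset (f1 i) := by
        intro w hw
        rw [SimpleGraph.mem_neighborFinset]
        rcases Finset.mem_union.mp hw with hw | hw
        · exact hmk0 _ _ (hU1full _ (hf1 i) w (Finset.mem_filter.mp hw).2)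
        · obtain ⟨j, hj, rfl⟩ := Finset.mem_image.mp hw
          exact hmk1 i j (Finset.mem_filter.mp hj).2
      have hdisj : Disjoint (Finset.univ.filter fun w => P w = 1)
          ((Finset.univ.filter fun j => H i j).image f3) := by
        rw [Finset.disjoint_left]
        intro w hw1 hw2
        obtain ⟨j, _, rfl⟩ := Finset.mem_image.mp hw2
        have := (Finset.mem_filter.mp hw1).2
        rw [hf3] at this
        exact absurd this (by decide)
      have hcard := Finset.card_le_card hsub
      rw [Finset.card_union_of_disjoint hdisj, hparts 1,
        Finset.card_image_of_injective _ hf3inj] at hcard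
      calc n + min σ d ≤ n + d := by omega
        _ ≤ n + (Finset.univ.filter fun j => H i j).card := by have := hHdeg i; omega
        _ ≤ (G.neighborFinset (f1 i)).card := hcard
        _ = G.degree (f1 i) := rfl
    · by_cases hv2 : v ∈ U2
      · obtain ⟨i, _, rfl⟩ := Finset.mem_image.mp (hU2eq ▸ hv2)
        have hsub : (Finset.univ.filter fun w => P w = 0) ∪
            ((Finset.univ.filter fun j => H i j).image f3) ⊆ G.neighborFinset (f2 i) := by
          intro w hw
          rw [SimpleGraph.mem_neighborFinset]
          rcases Finset.mem_union.mp hw with hw | hw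
          · exact hmk0 _ _ (hU2full _ (hf2 i) w (Finset.mem_filter.mp hw).2)
          · obtain ⟨j, hj, rfl⟩ := Finset.mem_image.mp hw
            exact hmk2 i j (Finset.mem_filter.mp hj).2
        have hdisj : Disjoint (Finset.univ.filter fun w => P w = 0)
            ((Finset.univ.filter fun j => H i j).image f3) := by
          rw [Finset.disjoint_left]
          intro w hw1 hw2
          obtain ⟨j, _, rfl⟩ := Finset.mem_image.mp hw2
          have := (Finset.mem_filter.mp hw1).2
          rw [hf3] at this
          exact absurd this (by decide)
        have hcard := Finset.card_le_card hsub
        rw [Finset.card_union_of_disjoint hdisj, hparts 0,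
          Finset.card_image_of_injective _ hf3inj] at hcard
        calc n + min σ d ≤ n + d := by omega
          _ ≤ n + (Finset.univ.filter fun j => H i j).card := by have := hHdeg i; omega
          _ ≤ (G.neighborFinset (f2 i)).card := hcard
          _ = G.degree (f2 i) := rfl
      · have hsub : G₀.neighborFinset v ⊆ G.neighborFinset v := by
          intro w hw
          rw [SimpleGraph.mem_neighborFinset] at hw ⊢
          exact hmk0 _ _ hw
        have hcard := Finset.card_le_card hsub
        have := hdeg v hv1 hv2
        have h2 : G₀.degree v ≤ G.degree v := hcard
        omega
  · -- no K_{t,t,t}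
    -- given all-H-edges between X-side (image of f) and C, build K_{t,t} in H
    have buildH : ∀ (f : Fin σ → V), Function.Injective f → ∀ X C : Finset V,
        X.card = t → C.card = t →
        (∀ x ∈ X, ∀ c ∈ C, ∃ i j, x = f i ∧ c = f3 j ∧ H i j) → False := by
      intro f hfinj X C hX hC hall
      apply hHfree
      refine ⟨Finset.univ.filter (fun i => f i ∈ X), Finset.univ.filter (fun j => f3 j ∈ C),
        ?_, ?_, ?_⟩
      · have himg : (Finset.univ.filter (fun i => f i ∈ X)).image f = X := by
          apply Finset.Subset.antisymm
          · intro x hx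
            obtain ⟨i, hi, rfl⟩ := Finset.mem_image.mp hx
            exact (Finset.mem_filter.mp hi).2
          · intro x hx
            obtain ⟨c, hc⟩ := Finset.card_pos.mp (by rw [hC]; omega)
            obtain ⟨i, j, rfl, _, _⟩ := hall x hx c hc
            exact Finset.mem_image.mpr ⟨i, Finset.mem_filter.mpr ⟨Finset.mem_univ _, hx⟩, rfl⟩
        rw [← Finset.card_image_of_injective _ hfinj, himg, hX]
      · have himg : (Finset.univ.filter (fun j => f3 j ∈ C)).image f3 = C := by
          apply Finset.Subset.antisymm
          · intro c hc
            obtain ⟨j, hj, rfl⟩ := Finset.mem_image.mp hc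
            exact (Finset.mem_filter.mp hj).2
          · intro c hc
            obtain ⟨x, hx⟩ := Finset.card_pos.mp (by rw [hX]; omega)
            obtain ⟨i, j, _, rfl, _⟩ := hall x hx c hc
            exact Finset.mem_image.mpr ⟨j, Finset.mem_filter.mpr ⟨Finset.mem_univ _, hc⟩, rfl⟩
        rw [← Finset.card_image_of_injective _ hf3inj, himg, hC]
      · intro i hi j hj
        obtain ⟨i', j', hi', hj', hH⟩ := hall (f i) (Finset.mem_filter.mp hi).2 (f3 j)
          (Finset.mem_filter.mp hj).2
        rwa [← hfinj hi', ← hf3inj hj'] at hH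
    -- extraction of H edges between parts 0/2 and 1/2
    have hACH : ∀ a c : V, P a = 0 → P c = 2 → G.Adj a c → ¬ G₀.Adj a c →
        ∃ i j, a = f1 i ∧ c = f3 j ∧ H i j := by
      intro a c hPa hPc hac h0
      rcases hdecomp a c hac with h | ⟨i,j,rfl,rfl,hij⟩ | ⟨i,j,rfl,rfl,hij⟩ |
        ⟨i,j,rfl,rfl,hij⟩ | ⟨i,j,rfl,rfl,hij⟩
      · exact absurd h h0
      · exact ⟨i, j, rfl, rfl, hij⟩
      · rw [hP2] at hPa; exact absurd hPa (by decide)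
      · rw [hP1] at hPc; exact absurd hPc (by decide)
      · rw [hP2] at hPc; exact absurd hPc (by decide)
    have hBCH : ∀ b c : V, P b = 1 → P c = 2 → G.Adj b c → ¬ G₀.Adj b c →
        ∃ i j, b = f2 i ∧ c = f3 j ∧ H i j := by
      intro b c hPb hPc hbc h0
      rcases hdecomp b c hbc with h | ⟨i,j,rfl,rfl,hij⟩ | ⟨i,j,rfl,rfl,hij⟩ |
        ⟨i,j,rfl,rfl,hij⟩ | ⟨i,j,rfl,rfl,hij⟩
      · exact absurd h h0
      · rw [hP1] at hPb; exact absurd hPb (by decide)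
      · exact ⟨i, j, rfl, rfl, hij⟩
      · rw [hP1] at hPc; exact absurd hPc (by decide)
      · rw [hP2] at hPc; exact absurd hPc (by decide)
    -- key lemma for correctly labelled parts
    have key : ∀ A B C : Finset V,
        (∀ a ∈ A, P a = 0) → (∀ b ∈ B, P b = 1) → (∀ c ∈ C, P c = 2) →
        A.card = t → B.card = t → C.card = t →
        (∀ a ∈ A, ∀ b ∈ B, G.Adj a b) → (∀ a ∈ A, ∀ c ∈ C, G.Adj a c) →
        (∀ b ∈ B, ∀ c ∈ C, G.Adj b c) → False := by
      intro A B C hA hB hC hAc hBc hCc hAB hAC hBC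
      -- A–B edges are G₀-edges
      have hAB0 : ∀ a ∈ A, ∀ b ∈ B, G₀.Adj a b := by
        intro a ha b hb
        rcases hdecomp a b (hAB a ha b hb) with h | ⟨i,j,rfl,heq,hij⟩ | ⟨i,j,rfl,heq,hij⟩ |
          ⟨i,j,heq,rfl,hij⟩ | ⟨i,j,heq,rfl,hij⟩
        · exact h
        · have := hB b hb; rw [heq, hf3] at this; exact absurd this (by decide)
        · have := hB b hb; rw [heq, hf3] at this; exact absurd this (by decide)
        · have := hA _ ha; rw [hf3] at this; exact absurd this (by decide)
        · have := hA _ ha; rw [hf3] at this; exact absurd this (by decide)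
      by_cases hcase : ∀ c ∈ C, ∀ a ∈ A, ¬ G₀.Adj a c
      · -- all A–C edges come from H: K_{t,t}
        exact buildH f1 hf1inj A C hAc hCc (fun a ha c hc =>
          hACH a c (hA a ha) (hC c hc) (hAC a ha c hc) (hcase c hc a ha))
      · push_neg at hcase
        obtain ⟨c0, hc0, a0, ha0, hac0⟩ := hcase
        -- all B–c0 edges are non-G₀, hence B ⊆ image f2
        have hBc0 : ∀ b ∈ B, ¬ G₀.Adj b c0 := by
          intro b hb hbc
          exact htri a0 b c0 (hAB0 a0 ha0 b hb) hac0 hbc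
        have hBU2 : ∀ b ∈ B, b ∈ U2 := by
          intro b hb
          obtain ⟨i, j, rfl, _, _⟩ := hBCH b c0 (hB b hb) (hC c0 hc0)
            (hBC b hb c0 hc0) (hBc0 b hb)
          exact hf2 i
        -- σ is positive
        have hσ : 0 < σ := by
          obtain ⟨b, hb⟩ := Finset.card_pos.mp (by rw [hBc]; omega)
          obtain ⟨i, j, _, _, _⟩ := hBCH b c0 (hB b hb) (hC c0 hc0)
            (hBC b hb c0 hc0) (hBc0 b hb)
          exact i.pos
        -- no B–C edge is a G₀ edge
        have hBC0 : ∀ b ∈ B, ∀ c ∈ C, ¬ G₀.Adj b c := by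
          intro b hb c hc hbc
          -- neighbors of c in G₀ all lie in part 1
          have hnb : G₀.neighborFinset c ⊆ Finset.univ.filter fun w => P w = 1 := by
            intro w hw
            rw [SimpleGraph.mem_neighborFinset] at hw
            refine Finset.mem_filter.mpr ⟨Finset.mem_univ _, ?_⟩
            have hne2 : P w ≠ 2 := fun h => (htrip _ _ hw) ((hC c hc).trans h.symm)
            by_contra hne1
            have hfin3 : ∀ x : Fin 3, x ≠ 2 → ¬ x = 1 → x = 0 := by decide
            exact htri b c w hbc (hU2full b (hBU2 b hb) w (hfin3 _ hne2 hne1)) hw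
          have hle : G₀.degree c ≤ n := by
            have := Finset.card_le_card hnb
            rw [hparts 1] at this
            exact this
          have hge := hdeg c (fun h => absurd ((hU1P c h).symm.trans (hC c hc)) (by decide))
            (fun h => absurd ((hU2P c h).symm.trans (hC c hc)) (by decide))
          omega
        exact buildH f2 hf2inj B C hBc hCc (fun b hb c hc =>
          hBCH b c (hB b hb) (hC c hc) (hBC b hb c hc) (hBC0 b hb c hc))
    rintro ⟨S1, S2, S3, h1, h2, h3, h12, h13, h23⟩
    obtain ⟨a0, ha0⟩ := Finset.card_pos.mp (by rw [h1]; omega)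
    obtain ⟨b0, hb0⟩ := Finset.card_pos.mp (by rw [h2]; omega)
    obtain ⟨c0, hc0⟩ := Finset.card_pos.mp (by rw [h3]; omega)
    have hd12 : P a0 ≠ P b0 := hPadj _ _ (h12 a0 ha0 b0 hb0)
    have hd13 : P a0 ≠ P c0 := hPadj _ _ (h13 a0 ha0 c0 hc0)
    have hd23 : P b0 ≠ P c0 := hPadj _ _ (h23 b0 hb0 c0 hc0)
    have third : ∀ x y u v : Fin 3, x ≠ u → x ≠ v → y ≠ u → y ≠ v → u ≠ v → x = y := by decide
    have hcst1 : ∀ a ∈ S1, P a = P a0 := fun a ha =>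
      third _ _ _ _ (hPadj _ _ (h12 a ha b0 hb0)) (hPadj _ _ (h13 a ha c0 hc0)) hd12 hd13 hd23
    have hcst2 : ∀ b ∈ S2, P b = P b0 := fun b hb =>
      third _ _ _ _ (fun h => hPadj _ _ (h12 a0 ha0 b hb) h.symm)
        (hPadj _ _ (h23 b hb c0 hc0)) (fun h => hd12 h.symm) hd23 hd13
    have hcst3 : ∀ c ∈ S3, P c = P c0 := fun c hc =>
      third _ _ _ _ (fun h => hPadj _ _ (h13 a0 ha0 c hc) h.symm)
        (fun h => hPadj _ _ (h23 b0 hb0 c hc) h.symm) (fun h => hd13 h.symm)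
        (fun h => hd23 h.symm) hd12
    have hsix : ∀ x y z : Fin 3, x ≠ y → x ≠ z → y ≠ z →
        (x = 0 ∧ y = 1 ∧ z = 2) ∨ (x = 0 ∧ y = 2 ∧ z = 1) ∨ (x = 1 ∧ y = 0 ∧ z = 2) ∨
        (x = 1 ∧ y = 2 ∧ z = 0) ∨ (x = 2 ∧ y = 0 ∧ z = 1) ∨ (x = 2 ∧ y = 1 ∧ z = 0) := by
      decide
    rcases hsix _ _ _ hd12 hd13 hd23 with ⟨e1,e2,e3⟩ | ⟨e1,e2,e3⟩ | ⟨e1,e2,e3⟩ | ⟨e1,e2,e3⟩ |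
      ⟨e1,e2,e3⟩ | ⟨e1,e2,e3⟩
    · exact key S1 S2 S3 (fun a ha => (hcst1 a ha).trans e1) (fun b hb => (hcst2 b hb).trans e2)
        (fun c hc => (hcst3 c hc).trans e3) h1 h2 h3 h12 h13 h23
    · exact key S1 S3 S2 (fun a ha => (hcst1 a ha).trans e1) (fun c hc => (hcst3 c hc).trans e3)
        (fun b hb => (hcst2 b hb).trans e2) h1 h3 h2 h13 h12
        (fun c hc b hb => (h23 b hb c hc).symm)
    · exact key S2 S1 S3 (fun b hb => (hcst2 b hb).trans e2) (fun a ha => (hcst1 a ha).trans e1)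
        (fun c hc => (hcst3 c hc).trans e3) h2 h1 h3
        (fun b hb a ha => (h12 a ha b hb).symm) h23 h13
    · exact key S3 S1 S2 (fun c hc => (hcst3 c hc).trans e3) (fun a ha => (hcst1 a ha).trans e1)
        (fun b hb => (hcst2 b hb).trans e2) h3 h1 h2
        (fun c hc a ha => (h13 a ha c hc).symm) (fun c hc b hb => (h23 b hb c hc).symm) h12
    · exact key S2 S3 S1 (fun b hb => (hcst2 b hb).trans e2) (fun c hc => (hcst3 c hc).trans e3)
        (fun a ha => (hcst1 a ha).trans e1) h2 h3 h1 h23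
        (fun b hb a ha => (h12 a ha b hb).symm) (fun c hc a ha => (h13 a ha c hc).symm)
    · exact key S3 S2 S1 (fun c hc => (hcst3 c hc).trans e3) (fun b hb => (hcst2 b hb).trans e2)
        (fun a ha => (hcst1 a ha).trans e1) h3 h2 h1
        (fun c hc b hb => (h23 b hb c hc).symm) (fun c hc a ha => (h13 a ha c hc).symm)
        (fun b hb a ha => (h12 a ha b hb).symm)
end

section
/- For every integer k ≥ 1 and every positive integer σ, there exists an n × n × n triangle-free tripartite graph (with n = 3kσ) containing sets U1 ⊂ V1 and U2 ⊂ V2 of size σ such that every vertex of U1 has neighbourhood exactly V2, every vertex of U2 has neighbourhood exactly V1, and every other vertex has degree exactly n + σ. -/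
open scoped Classical
open Finset

namespace Stmt15Aux

/-- value of the Andrásfai-graph vertex assigned to block `t` of part `p`. -/
def hpart (k p t : ℕ) : ℕ :=
  if p = 0 then (t + 2) / 3
  else if p = 1 then 2 * k + 1 - (t + 2) / 3
  else 2 * k + 2 + t / 3

def gf (k σ p j : ℕ) : ℕ := hpart k p (j / σ)

def dd (k x y : ℕ) : ℕ := (y + (3 * k + 2) - x) % (3 * k + 2)

def cnd (k x y : ℕ) : Prop := k + 1 ≤ dd k x y ∧ dd k x y ≤ 2 * k + 1

instance (k x y : ℕ) : Decidable (cnd k x y) := inferInstanceAs (Decidable (_ ∧ _))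

lemma cnd_iff {k x y : ℕ} (hx : x ≤ 3 * k + 1) (hy : y ≤ 3 * k + 1) :
    cnd k x y ↔ ((x ≤ y ∧ k + 1 ≤ y - x ∧ y - x ≤ 2 * k + 1) ∨
      (y < x ∧ k + 1 ≤ y + (3 * k + 2) - x ∧ y + (3 * k + 2) - x ≤ 2 * k + 1)) := by
  unfold cnd dd
  rcases le_or_gt x y with h | h
  · have h1 : y + (3 * k + 2) - x = (y - x) + (3 * k + 2) := by omega
    rw [h1, Nat.add_mod_right, Nat.mod_eq_of_lt (by omega)]
    omega
  · rw [Nat.mod_eq_of_lt (by omega)]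
    omega

lemma cnd_irrefl (k x : ℕ) : ¬ cnd k x x := by
  unfold cnd dd
  have h1 : x + (3 * k + 2) - x = 3 * k + 2 := by omega
  rw [h1, Nat.mod_self]
  omega

lemma gf_bounds {k σ p j : ℕ} (hσ : 0 < σ) (hj : j < 3 * k * σ) :
    (p = 0 → gf k σ p j ≤ k) ∧
    (p = 1 → k + 1 ≤ gf k σ p j ∧ gf k σ p j ≤ 2 * k + 1) ∧
    (p = 2 → 2 * k + 2 ≤ gf k σ p j ∧ gf k σ p j ≤ 3 * k + 1) := by
  have ht : j / σ < 3 * k := Nat.div_lt_iff_lt_mul hσ |>.2 hj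
  unfold gf hpart
  refine ⟨?_, ?_, ?_⟩ <;> intro h <;> subst h <;> simp <;> omega

lemma gf_le {k σ p j : ℕ} (hσ : 0 < σ) (hj : j < 3 * k * σ) (hp : p < 3) :
    gf k σ p j ≤ 3 * k + 1 := by
  obtain ⟨h0, h1, h2⟩ := gf_bounds (p := p) hσ hj
  interval_cases p
  · have := h0 rfl; omega
  · have := h1 rfl; omega
  · have := h2 rfl; omega

lemma pos_aux {k σ n : ℕ} (h : n < 3 * k * σ) : 0 < k ∧ 0 < σ := by
  constructor
  · rcases Nat.eq_zero_or_pos k with rfl | hh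
    · simp at h
    · exact hh
  · rcases Nat.eq_zero_or_pos σ with rfl | hh
    · simp at h
    · exact hh

def G (k σ : ℕ) : SimpleGraph (Fin 3 × Fin (3 * k * σ)) where
  Adj u v := cnd k (gf k σ u.1.1 u.2.1) (gf k σ v.1.1 v.2.1)
  symm := by
    constructor
    rintro ⟨p, i⟩ ⟨q, j⟩ h
    obtain ⟨hk, hσ⟩ := pos_aux i.isLt
    have b1 := gf_le (p := p.1) hσ i.isLt p.isLt
    have b2 := gf_le (p := q.1) hσ j.isLt q.isLt
    rw [cnd_iff b1 b2] at h
    rw [cnd_iff b2 b1]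
    omega
  loopless := by
    constructor
    rintro ⟨p, i⟩ h
    exact cnd_irrefl k _ h



lemma fin_count (n : ℕ) (Q : ℕ → Prop) [DecidablePred Q] :
    (univ.filter fun j : Fin n => Q j.1).card = ((range n).filter Q).card := by
  refine Finset.card_bij (fun j _ => j.1) ?_ ?_ ?_
  · rintro a ha
    simp only [mem_filter, mem_univ, true_and] at ha
    simp [a.isLt, ha]
  · intro a _ b _ h
    exact Fin.ext h
  · intro b hb
    simp only [mem_filter, mem_range] at hb
    exact ⟨⟨b, hb.1⟩, by simp [hb.2], rfl⟩

lemma count_blocks (b q : ℕ) (hb : 0 < b) (Q : ℕ → Prop) [DecidablePred Q] :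
    ((range (q * b)).filter fun j => Q (j / b)).card = b * ((range q).filter Q).card := by
  induction q with
  | zero => simp
  | succ q ih =>
    have h1 : (q + 1) * b = q * b + b := by ring
    rw [h1, Finset.card_filter, Finset.sum_range_add]
    have h2 : ∀ i ∈ range b, (if Q ((q * b + i) / b) then (1:ℕ) else 0)
        = (if Q q then (1:ℕ) else 0) := by
      intro i hi
      simp only [mem_range] at hi
      have h3 : q * b + i = i + b * q := by ring
      have h4 : (q * b + i) / b = q := by
        rw [h3, Nat.add_mul_div_left _ _ hb, Nat.div_eq_of_lt hi, Nat.zero_add]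
      rw [h4]
    rw [Finset.sum_congr rfl h2, ← Finset.card_filter, ih, Finset.sum_const, card_range,
      smul_eq_mul]
    rw [show ((range (q+1)).filter Q).card = ∑ i ∈ range (q+1), if Q i then (1:ℕ) else 0 from Finset.card_filter _ _,
      Finset.sum_range_succ, ← Finset.card_filter, Nat.mul_add]

lemma prod_count (n : ℕ) (P : Fin 3 → ℕ → Prop) [∀ p, DecidablePred (P p)] :
    (univ.filter fun v : Fin 3 × Fin n => P v.1 v.2.1).card
      = ((range n).filter (P 0)).card + ((range n).filter (P 1)).card
        + ((range n).filter (P 2)).card := by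
  rw [Finset.card_filter, Fintype.sum_prod_type, Fin.sum_univ_three]
  have h : ∀ p : Fin 3, (∑ j : Fin n, if P p j.1 then (1:ℕ) else 0)
      = ((range n).filter (P p)).card := by
    intro p
    rw [← fin_count n (P p)]
    rw [Finset.card_filter]
  rw [h 0, h 1, h 2]

lemma hpart_le {k p t : ℕ} (hk : 1 ≤ k) (ht : t < 3 * k) : hpart k p t ≤ 3 * k + 1 := by
  unfold hpart
  split
  · omega
  · split <;> omega

lemma deg_count (k x : ℕ) (hk : 1 ≤ k) (hx1 : 1 ≤ x) (hx2 : x ≤ 3 * k + 1)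
    (hx3 : x ≠ 2 * k + 1) :
    ((range (3 * k)).filter fun t => cnd k x (hpart k 0 t)).card
      + ((range (3 * k)).filter fun t => cnd k x (hpart k 1 t)).card
      + ((range (3 * k)).filter fun t => cnd k x (hpart k 2 t)).card = 3 * k + 1 := by
  rcases (by omega : (1 ≤ x ∧ x ≤ k) ∨ (k + 1 ≤ x ∧ x ≤ 2 * k) ∨
      (2 * k + 2 ≤ x ∧ x ≤ 3 * k + 1)) with h | h | h
  · -- region 1 : x ∈ [1, k]
    have e0 : ((range (3 * k)).filter fun t => cnd k x (hpart k 0 t)) = ∅ := by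
      ext t
      simp only [mem_filter, mem_range, notMem_empty, iff_false, not_and]
      intro ht hc
      rw [cnd_iff hx2 (hpart_le hk ht)] at hc
      norm_num [hpart] at hc
      omega
    have e1 : ((range (3 * k)).filter fun t => cnd k x (hpart k 1 t))
        = range (3 * k - 3 * x + 1) := by
      ext t
      simp only [mem_filter, mem_range]
      constructor
      · rintro ⟨ht, hc⟩
        rw [cnd_iff hx2 (hpart_le hk ht)] at hc
        norm_num [hpart] at hc
        omega
      · intro ht
        have ht3 : t < 3 * k := by omega
        refine ⟨ht3, ?_⟩
        rw [cnd_iff hx2 (hpart_le hk ht3)]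
        norm_num [hpart]
        omega
    have e2 : ((range (3 * k)).filter fun t => cnd k x (hpart k 2 t)) = range (3 * x) := by
      ext t
      simp only [mem_filter, mem_range]
      constructor
      · rintro ⟨ht, hc⟩
        rw [cnd_iff hx2 (hpart_le hk ht)] at hc
        norm_num [hpart] at hc
        omega
      · intro ht
        have ht3 : t < 3 * k := by omega
        refine ⟨ht3, ?_⟩
        rw [cnd_iff hx2 (hpart_le hk ht3)]
        norm_num [hpart]
        omega
    rw [e0, e1, e2]
    simp only [card_empty, card_range]
    omega
  · -- region 2 : x ∈ [k+1, 2k]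
    have e0 : ((range (3 * k)).filter fun t => cnd k x (hpart k 0 t))
        = range (3 * x - 3 * k - 2) := by
      ext t
      simp only [mem_filter, mem_range]
      constructor
      · rintro ⟨ht, hc⟩
        rw [cnd_iff hx2 (hpart_le hk ht)] at hc
        norm_num [hpart] at hc
        omega
      · intro ht
        have ht3 : t < 3 * k := by omega
        refine ⟨ht3, ?_⟩
        rw [cnd_iff hx2 (hpart_le hk ht3)]
        norm_num [hpart]
        omega
    have e1 : ((range (3 * k)).filter fun t => cnd k x (hpart k 1 t)) = ∅ := by
      ext t
      simp only [mem_filter, mem_range, notMem_empty, iff_false, not_and]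
      intro ht hc
      rw [cnd_iff hx2 (hpart_le hk ht)] at hc
      norm_num [hpart] at hc
      omega
    have e2 : ((range (3 * k)).filter fun t => cnd k x (hpart k 2 t))
        = Ico (3 * x - 3 * k - 3) (3 * k) := by
      ext t
      simp only [mem_filter, mem_range, mem_Ico]
      constructor
      · rintro ⟨ht, hc⟩
        rw [cnd_iff hx2 (hpart_le hk ht)] at hc
        norm_num [hpart] at hc
        omega
      · rintro ⟨ht1, ht3⟩
        refine ⟨ht3, ?_⟩
        rw [cnd_iff hx2 (hpart_le hk ht3)]
        norm_num [hpart]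
        omega
    rw [e0, e1, e2]
    simp only [card_empty, card_range, Nat.card_Ico]
    omega
  · -- region 3 : x ∈ [2k+2, 3k+1]
    have e0 : ((range (3 * k)).filter fun t => cnd k x (hpart k 0 t))
        = Ico (3 * x - 6 * k - 5) (3 * k) := by
      ext t
      simp only [mem_filter, mem_range, mem_Ico]
      constructor
      · rintro ⟨ht, hc⟩
        rw [cnd_iff hx2 (hpart_le hk ht)] at hc
        norm_num [hpart] at hc
        omega
      · rintro ⟨ht1, ht3⟩
        refine ⟨ht3, ?_⟩
        rw [cnd_iff hx2 (hpart_le hk ht3)]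
        norm_num [hpart]
        omega
    have e1 : ((range (3 * k)).filter fun t => cnd k x (hpart k 1 t))
        = Ico (9 * k + 4 - 3 * x) (3 * k) := by
      ext t
      simp only [mem_filter, mem_range, mem_Ico]
      constructor
      · rintro ⟨ht, hc⟩
        rw [cnd_iff hx2 (hpart_le hk ht)] at hc
        norm_num [hpart] at hc
        omega
      · rintro ⟨ht1, ht3⟩
        refine ⟨ht3, ?_⟩
        rw [cnd_iff hx2 (hpart_le hk ht3)]
        norm_num [hpart]
        omega
    have e2 : ((range (3 * k)).filter fun t => cnd k x (hpart k 2 t)) = ∅ := by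
      ext t
      simp only [mem_filter, mem_range, notMem_empty, iff_false, not_and]
      intro ht hc
      rw [cnd_iff hx2 (hpart_le hk ht)] at hc
      norm_num [hpart] at hc
      omega
    rw [e0, e1, e2]
    simp only [card_empty, Nat.card_Ico]
    omega

end Stmt15Aux
/-- For every `k ≥ 1` and `σ ≥ 1` there is an `n × n × n` triangle-free tripartite graph
(with `n = 3kσ`) containing sets `U1 ⊆ V1`, `U2 ⊆ V2` of size `σ` such that every vertex
of `U1` has neighbourhood exactly `V2`, every vertex of `U2` has neighbourhood exactly
`V1`, and every other vertex has degree exactly `n + σ`. -/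
theorem stmt_15 (k σ : ℕ) (hk : 1 ≤ k) (hσ : 1 ≤ σ) :
    ∃ (G : SimpleGraph (Fin 3 × Fin (3 * k * σ))) (U1 U2 : Finset (Fin 3 × Fin (3 * k * σ))),
      (∀ u v, G.Adj u v → u.1 ≠ v.1) ∧
      G.CliqueFree 3 ∧
      (∀ v ∈ U1, v.1 = 0) ∧ (∀ v ∈ U2, v.1 = 1) ∧
      U1.card = σ ∧ U2.card = σ ∧
      (∀ v ∈ U1, ∀ w, G.Adj v w ↔ w.1 = 1) ∧
      (∀ v ∈ U2, ∀ w, G.Adj v w ↔ w.1 = 0) ∧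
      (∀ v, v ∉ U1 → v ∉ U2 → G.degree v = 3 * k * σ + σ) := by
  classical
  have hσ' : 0 < σ := hσ
  have hσn : σ ≤ 3 * k * σ := Nat.le_mul_of_pos_left σ (by omega)
  refine ⟨Stmt15Aux.G k σ,
    univ.filter (fun v : Fin 3 × Fin (3 * k * σ) => v.1.1 = 0 ∧ v.2.1 < σ),
    univ.filter (fun v : Fin 3 × Fin (3 * k * σ) => v.1.1 = 1 ∧ v.2.1 < σ),
    ?_, ?_, ?_, ?_, ?_, ?_, ?_, ?_, ?_⟩
  · -- tripartite
    rintro ⟨p, i⟩ ⟨q, j⟩ hadj heq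
    simp only [Prod.fst] at heq
    subst heq
    obtain ⟨hk', hσ''⟩ := Stmt15Aux.pos_aux i.isLt
    obtain ⟨a0, a1, a2⟩ := Stmt15Aux.gf_bounds (k := k) (σ := σ) (p := p.1) hσ'' i.isLt
    obtain ⟨b0, b1, b2⟩ := Stmt15Aux.gf_bounds (k := k) (σ := σ) (p := p.1) hσ'' j.isLt
    have hadj' := hadj
    rw [Stmt15Aux.G] at hadj'
    simp only at hadj'
    rw [Stmt15Aux.cnd_iff (Stmt15Aux.gf_le hσ'' i.isLt p.isLt)
      (Stmt15Aux.gf_le hσ'' j.isLt p.isLt)] at hadj'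
    obtain ⟨P, hP⟩ := p
    interval_cases P
    · have := a0 rfl; have := b0 rfl; omega
    · have := a1 rfl; have := b1 rfl; omega
    · have := a2 rfl; have := b2 rfl; omega
  · -- triangle free
    intro s hs
    rw [SimpleGraph.is3Clique_iff] at hs
    obtain ⟨a, b, c, hab, hac, hbc, -⟩ := hs
    obtain ⟨hk', hσ''⟩ := Stmt15Aux.pos_aux a.2.isLt
    have ba := Stmt15Aux.gf_le (k := k) (σ := σ) hσ'' a.2.isLt a.1.isLt
    have bb := Stmt15Aux.gf_le (k := k) (σ := σ) hσ'' b.2.isLt b.1.isLt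
    have bc := Stmt15Aux.gf_le (k := k) (σ := σ) hσ'' c.2.isLt c.1.isLt
    rw [Stmt15Aux.G] at hab hac hbc
    simp only at hab hac hbc
    rw [Stmt15Aux.cnd_iff ba bb] at hab
    rw [Stmt15Aux.cnd_iff ba bc] at hac
    rw [Stmt15Aux.cnd_iff bb bc] at hbc
    omega
  · rintro ⟨p, i⟩ hv
    simp only [mem_filter, mem_univ, true_and] at hv
    exact Fin.ext hv.1
  · rintro ⟨p, i⟩ hv
    simp only [mem_filter, mem_univ, true_and] at hv
    exact Fin.ext hv.1
  · -- card U1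
    rw [Stmt15Aux.prod_count (3 * k * σ) (fun q i => q.1 = 0 ∧ i < σ)]
    have h0 : ((range (3 * k * σ)).filter fun i => ((0 : Fin 3)).1 = 0 ∧ i < σ) = range σ := by
      ext i; simp only [mem_filter, mem_range]; norm_num; omega
    have h1 : ((range (3 * k * σ)).filter fun i => ((1 : Fin 3)).1 = 0 ∧ i < σ) = ∅ := by
      ext i; simp
    have h2 : ((range (3 * k * σ)).filter fun i => ((2 : Fin 3)).1 = 0 ∧ i < σ) = ∅ := by
      ext i; simp
    rw [h0, h1, h2]; simp
  · -- card U2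
    rw [Stmt15Aux.prod_count (3 * k * σ) (fun q i => q.1 = 1 ∧ i < σ)]
    have h0 : ((range (3 * k * σ)).filter fun i => ((0 : Fin 3)).1 = 1 ∧ i < σ) = ∅ := by
      ext i; simp
    have h1 : ((range (3 * k * σ)).filter fun i => ((1 : Fin 3)).1 = 1 ∧ i < σ) = range σ := by
      ext i; simp only [mem_filter, mem_range]; norm_num; omega
    have h2 : ((range (3 * k * σ)).filter fun i => ((2 : Fin 3)).1 = 1 ∧ i < σ) = ∅ := by
      ext i; simp
    rw [h0, h1, h2]; simp
  · -- U1 neighbourhoods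
    rintro ⟨p, j⟩ hv ⟨q, i⟩
    simp only [mem_filter, mem_univ, true_and] at hv
    obtain ⟨hp0, hjσ⟩ := hv
    have hx : Stmt15Aux.gf k σ p.1 j.1 = 0 := by
      unfold Stmt15Aux.gf Stmt15Aux.hpart
      rw [hp0, Nat.div_eq_of_lt hjσ]
      norm_num
    have hq1 : ((q : Fin 3) = (1 : Fin 3)) ↔ q.1 = 1 := by
      rw [Fin.ext_iff]; norm_num
    rw [show (Stmt15Aux.G k σ).Adj (p, j) (q, i)
        = Stmt15Aux.cnd k (Stmt15Aux.gf k σ p.1 j.1) (Stmt15Aux.gf k σ q.1 i.1) from rfl,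
      hx, Stmt15Aux.cnd_iff (by omega) (Stmt15Aux.gf_le hσ' i.isLt q.isLt), hq1]
    obtain ⟨Q, hQ⟩ := q
    simp only [Fin.val_mk]
    interval_cases Q
    · have := (Stmt15Aux.gf_bounds (k := k) (σ := σ) (p := 0) hσ' i.isLt).1 rfl
      omega
    · have := ((Stmt15Aux.gf_bounds (k := k) (σ := σ) (p := 1) hσ' i.isLt).2).1 rfl
      omega
    · have := ((Stmt15Aux.gf_bounds (k := k) (σ := σ) (p := 2) hσ' i.isLt).2).2 rfl
      omega
  · -- U2 neighbourhoods
    rintro ⟨p, j⟩ hv ⟨q, i⟩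
    simp only [mem_filter, mem_univ, true_and] at hv
    obtain ⟨hp0, hjσ⟩ := hv
    have hx : Stmt15Aux.gf k σ p.1 j.1 = 2 * k + 1 := by
      unfold Stmt15Aux.gf Stmt15Aux.hpart
      rw [hp0, Nat.div_eq_of_lt hjσ]
      norm_num
    have hq1 : ((q : Fin 3) = (0 : Fin 3)) ↔ q.1 = 0 := by
      rw [Fin.ext_iff]; norm_num
    rw [show (Stmt15Aux.G k σ).Adj (p, j) (q, i)
        = Stmt15Aux.cnd k (Stmt15Aux.gf k σ p.1 j.1) (Stmt15Aux.gf k σ q.1 i.1) from rfl,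
      hx, Stmt15Aux.cnd_iff (by omega) (Stmt15Aux.gf_le hσ' i.isLt q.isLt), hq1]
    obtain ⟨Q, hQ⟩ := q
    simp only [Fin.val_mk]
    interval_cases Q
    · have := (Stmt15Aux.gf_bounds (k := k) (σ := σ) (p := 0) hσ' i.isLt).1 rfl
      omega
    · have := ((Stmt15Aux.gf_bounds (k := k) (σ := σ) (p := 1) hσ' i.isLt).2).1 rfl
      omega
    · have := ((Stmt15Aux.gf_bounds (k := k) (σ := σ) (p := 2) hσ' i.isLt).2).2 rfl
      omega
  · -- degrees
    rintro ⟨⟨P, hP3⟩, j⟩ hv1 hv2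
    simp only [mem_filter, mem_univ, true_and, not_and, not_lt, Fin.val_mk] at hv1 hv2
    have ht3 : j.1 / σ < 3 * k := Nat.div_lt_iff_lt_mul hσ' |>.2 j.isLt
    have hxfacts : 1 ≤ Stmt15Aux.gf k σ P j.1 ∧ Stmt15Aux.gf k σ P j.1 ≤ 3 * k + 1 ∧
        Stmt15Aux.gf k σ P j.1 ≠ 2 * k + 1 := by
      have h1 : σ ≤ j.1 → 1 ≤ j.1 / σ := fun h => (Nat.one_le_div_iff hσ').2 h
      unfold Stmt15Aux.gf Stmt15Aux.hpart
      generalize hu : j.1 / σ = u at ht3 h1 ⊢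
      interval_cases P
      · have := h1 (hv1 rfl)
        rw [if_pos rfl]
        omega
      · have := h1 (hv2 rfl)
        rw [if_neg (by decide), if_pos rfl]
        omega
      · rw [if_neg (by decide), if_neg (by decide)]
        omega
    set x := Stmt15Aux.gf k σ P j.1 with hxdef
    have hdeg : (Stmt15Aux.G k σ).degree ((⟨P, hP3⟩ : Fin 3), j)
        = (univ.filter fun w : Fin 3 × Fin (3 * k * σ) =>
            Stmt15Aux.cnd k x (Stmt15Aux.gf k σ w.1.1 w.2.1)).card := by
      rw [← SimpleGraph.card_neighborFinset_eq_degree, SimpleGraph.neighborFinset_eq_filter]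
      congr 1
      ext w
      simp only [mem_filter]
      exact Iff.rfl
    rw [hdeg, Stmt15Aux.prod_count (3 * k * σ)
      (fun q i => Stmt15Aux.cnd k x (Stmt15Aux.gf k σ q.1 i))]
    have hpc : ∀ P : ℕ, ((range (3 * k * σ)).filter
        fun i => Stmt15Aux.cnd k x (Stmt15Aux.gf k σ P i)).card
        = σ * ((range (3 * k)).filter fun t => Stmt15Aux.cnd k x (Stmt15Aux.hpart k P t)).card := by
      intro P
      have := Stmt15Aux.count_blocks σ (3 * k) hσ'
        (fun t => Stmt15Aux.cnd k x (Stmt15Aux.hpart k P t))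
      simp only [Stmt15Aux.gf]
      convert this
      exact Finset.filter_congr_decidable _ _ _
    rw [hpc, hpc, hpc]
    have hsum := Stmt15Aux.deg_count k x hk hxfacts.1 hxfacts.2.1 hxfacts.2.2
    set c0 := ((range (3 * k)).filter fun t => Stmt15Aux.cnd k x (Stmt15Aux.hpart k 0 t)).card
    set c1 := ((range (3 * k)).filter fun t => Stmt15Aux.cnd k x (Stmt15Aux.hpart k 1 t)).card
    set c2 := ((range (3 * k)).filter fun t => Stmt15Aux.cnd k x (Stmt15Aux.hpart k 2 t)).card
    calc σ * c0 + σ * c1 + σ * c2 = σ * (c0 + c1 + c2) := by ring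
    _ = σ * (3 * k + 1) := by rw [hsum]
    _ = 3 * k * σ + σ := by ring
end

section
/- Let G be an n × n × n tripartite graph with minimum degree at least n + τ, equipped with functions f⁺, f⁻ as in the booster setup. Let u be a vertex minimizing f⁺. Then u has a forward neighbour v, the edge uv is a booster (f⁺(u) ≤ f⁺(v)), and consequently u and v have at least τ common neighbours; in particular if τ ≥ 1 then G contains a triangle. -/
open scoped Classical

/-- Graver's argument: with `f⁺, f⁻` as in the booster setup and `τ ≥ 1`, a vertex `u`
minimising `f⁺` has a forward neighbour `v`, the edge `uv` is a booster, `u` and `v` have at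
least `τ` common neighbours, and `G` contains a triangle. -/
theorem stmt_18 (n τ : ℕ) {V : Type} [Fintype V] (G : SimpleGraph V) (P : V → Fin 3)
    (hparts : ∀ i : Fin 3, (Finset.univ.filter fun v => P v = i).card = n)
    (htrip : ∀ u v, G.Adj u v → P u ≠ P v)
    (hdeg : ∀ v, n + τ ≤ G.degree v)
    (fp fm : V → ℕ)
    (hfp : ∀ v, τ ≤ fp v ∧ fp v ≤ (Finset.univ.filter fun w => G.Adj v w ∧ P w = P v + 1).card)
    (hfm : ∀ v, τ ≤ fm v ∧ fm v ≤ (Finset.univ.filter fun w => G.Adj v w ∧ P w = P v + 2).card)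
    (hsum : ∀ v, fp v + fm v = n + τ)
    (u : V) (hmin : ∀ w, fp u ≤ fp w) (hτ : 1 ≤ τ) :
    ∃ v, G.Adj u v ∧ P v = P u + 1 ∧ fp u ≤ fp v ∧
      τ ≤ (Finset.univ.filter fun w => G.Adj u w ∧ G.Adj v w ∧ P w = P u + 2).card ∧
      ∃ a b c : V, G.Adj a b ∧ G.Adj b c ∧ G.Adj a c := by
  -- forward neighbourhood of u is nonempty
  have hcardF : 1 ≤ (Finset.univ.filter fun w => G.Adj u w ∧ P w = P u + 1).card :=
    le_trans (le_trans hτ (hfp u).1) (hfp u).2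
  obtain ⟨v, hv⟩ := Finset.card_pos.mp hcardF
  rw [Finset.mem_filter] at hv
  obtain ⟨-, huv, hPv⟩ := hv
  refine ⟨v, huv, hPv, hmin v, ?_⟩
  -- sets
  set A := Finset.univ.filter (fun w => G.Adj u w ∧ P w = P u + 2) with hA
  set B := Finset.univ.filter (fun w => G.Adj v w ∧ P w = P v + 1) with hB
  set T := Finset.univ.filter (fun w => G.Adj u w ∧ G.Adj v w ∧ P w = P u + 2) with hT
  have hPv1 : P v + 1 = P u + 2 := by rw [hPv, add_assoc]; norm_num; rfl
  have hsub : A ∩ B ⊆ T := by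
    intro w hw
    simp only [hA, hB, hT, Finset.mem_inter, Finset.mem_filter] at hw ⊢
    tauto
  have hunion : A ∪ B ⊆ Finset.univ.filter (fun w => P w = P u + 2) := by
    intro w hw
    simp only [hA, hB, Finset.mem_union, Finset.mem_filter, hPv1] at hw ⊢
    tauto
  have hcardU : (A ∪ B).card ≤ n := by
    rw [← hparts (P u + 2)]; exact Finset.card_le_card hunion
  have hkey : A.card + B.card = (A ∪ B).card + (A ∩ B).card :=
    (Finset.card_union_add_card_inter A B).symm
  have hAcard : fm u ≤ A.card := (hfm u).2
  have hBcard : fp v ≤ B.card := (hfp v).2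
  have hτle : τ ≤ (A ∩ B).card := by
    have h1 : n + τ ≤ A.card + B.card := by
      calc n + τ = fp u + fm u := (hsum u).symm
        _ ≤ fp v + fm u := by exact Nat.add_le_add_right (hmin v) _
        _ ≤ B.card + A.card := Nat.add_le_add hBcard hAcard
        _ = A.card + B.card := Nat.add_comm _ _
    omega
  have hTcard : τ ≤ T.card := le_trans hτle (Finset.card_le_card hsub)
  refine ⟨hTcard, ?_⟩
  have : 1 ≤ T.card := le_trans hτ hTcard
  obtain ⟨w, hw⟩ := Finset.card_pos.mp this
  simp only [hT, Finset.mem_filter] at hw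
  exact ⟨u, v, w, huv, hw.2.2.1, hw.2.1⟩
end
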